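/- Consider the IFS on X = [0,1] with Λ = {0,1}, ω_0(x) = x/2, ω_1(x) = min(2x, 1), and the Bernoulli(1/2,1/2) measure ℙ on Ω = {0,1}^ℕ. Then ℙ(S) = 1, where S = {σ ∈ Ω : lim_{n→∞} diam(ω_{σ_1} ∘ ⋯ ∘ ω_{σ_n}([0,1])) = 0}; i.e., this IFS is ℙ-weakly hyperbolic. -/

import Mathlib

open Metric Set Filter MeasureTheory
open scoped ENNReal NNReal Topology

def hcomp {Λ X : Type*} (ω : Λ → X → X) (σ : ℕ → Λ) : ℕ → X → X
  | 0 => id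
  | n + 1 => hcomp ω σ n ∘ ω (σ n)

def IsBernoulli {Λ : Type*} [MeasurableSpace Λ]
    (p : Measure Λ) (P : Measure (ℕ → Λ)) : Prop :=
  IsProbabilityMeasure P ∧
    ∀ (n : ℕ) (A : ℕ → Set Λ), (∀ i, MeasurableSet (A i)) →
      P {σ | ∀ i < n, σ i ∈ A i} = ∏ i ∈ Finset.range n, p (A i)

/-- `ω_0(x) = x / 2` on `[0,1]`. -/
noncomputable def w0 (x : Set.Icc (0:ℝ) 1) : Set.Icc (0:ℝ) 1 :=
  ⟨(x : ℝ) / 2, ⟨by have := x.2.1; linarith, by have := x.2.2; linarith⟩⟩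

/-- `ω_1(x) = min (2x) 1` on `[0,1]`. -/
noncomputable def w1 (x : Set.Icc (0:ℝ) 1) : Set.Icc (0:ℝ) 1 :=
  ⟨min (2 * (x : ℝ)) 1,
    ⟨le_min (by have := x.2.1; linarith) zero_le_one, min_le_right _ _⟩⟩

/-- The IFS with parameter space `{0, 1}` (encoded by `Bool`). -/
noncomputable def wmap : Bool → Set.Icc (0:ℝ) 1 → Set.Icc (0:ℝ) 1
  | false => w0
  | true => w1

/-- The set `S` where `diam (ω_{σ_1} ∘ ⋯ ∘ ω_{σ_n}([0,1])) → 0`. -/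
def Sset : Set (ℕ → Bool) :=
  {σ | Tendsto (fun n => Metric.diam (Set.range (hcomp wmap σ n))) atTop (nhds 0)}


section Aux

noncomputable def cval (σ : ℕ → Bool) : ℕ → ℝ
  | 0 => 1
  | n + 1 => if σ n then 2 * cval σ n else cval σ n / 2

noncomputable def Dval (σ : ℕ → Bool) : ℕ → ℝ
  | 0 => 1
  | n + 1 => min (cval σ n * (if σ n then 1 else 1/2)) (Dval σ n)

lemma cval_pos (σ : ℕ → Bool) (n : ℕ) : 0 < cval σ n := by
  induction n with
  | zero => norm_num [cval]
  | succ n ih => rcases Bool.dichotomy (σ n) with h | h <;> simp [cval, h] <;> linarith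

lemma Dval_pos (σ : ℕ → Bool) (n : ℕ) : 0 < Dval σ n := by
  induction n with
  | zero => norm_num [Dval]
  | succ n ih =>
    have := cval_pos σ n
    rcases Bool.dichotomy (σ n) with h | h <;>
      simp [Dval, h, lt_min_iff] <;> constructor <;> linarith

lemma Dval_antitone (σ : ℕ → Bool) : Antitone (Dval σ) :=
  antitone_nat_of_succ_le fun n => min_le_right _ _

lemma Dval_le_cval (σ : ℕ → Bool) (n : ℕ) : Dval σ (n + 1) ≤ cval σ n := by
  refine (min_le_left _ _).trans ?_
  have := (cval_pos σ n).le
  rcases Bool.dichotomy (σ n) with h | h <;> simp [h] <;> linarith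

lemma hcomp_eq (σ : ℕ → Bool) (n : ℕ) (x : Set.Icc (0:ℝ) 1) :
    ((hcomp wmap σ n x : Set.Icc (0:ℝ) 1) : ℝ) = min (cval σ n * x) (Dval σ n) := by
  induction n generalizing x with
  | zero =>
    simp only [hcomp, id_eq, cval, Dval, one_mul]
    exact (min_eq_left x.2.2).symm
  | succ n ih =>
    have hc := (cval_pos σ n).le
    have hx0 := x.2.1
    have hx1 := x.2.2
    have hrw : hcomp wmap σ (n+1) x = hcomp wmap σ n (wmap (σ n) x) := rfl
    rcases Bool.dichotomy (σ n) with h | h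
    · have hw : ((wmap (σ n) x : Set.Icc (0:ℝ) 1) : ℝ) = (x:ℝ)/2 := by rw [h]; rfl
      have hcv : cval σ (n+1) = cval σ n / 2 := by simp [cval, h]
      have hDv : Dval σ (n+1) = min (cval σ n * (1/2)) (Dval σ n) := by simp [Dval, h]
      have e1 : cval σ n * ((x:ℝ)/2) = cval σ n / 2 * x := by ring
      rw [hrw, ih (wmap (σ n) x), hw, hcv, hDv, e1, ← min_assoc,
        min_eq_left (by nlinarith : cval σ n / 2 * (x:ℝ) ≤ cval σ n * (1/2))]
    · have hw : ((wmap (σ n) x : Set.Icc (0:ℝ) 1) : ℝ) = min (2*(x:ℝ)) 1 := by rw [h]; rfl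
      have hcv : cval σ (n+1) = 2 * cval σ n := by simp [cval, h]
      have hDv : Dval σ (n+1) = min (cval σ n * 1) (Dval σ n) := by simp [Dval, h]
      have e1 : cval σ n * (2*(x:ℝ)) = 2 * cval σ n * x := by ring
      rw [hrw, ih (wmap (σ n) x), hw, mul_min_of_nonneg _ _ hc, hcv, hDv, e1, min_assoc]

lemma diam_le (σ : ℕ → Bool) (n : ℕ) :
    Metric.diam (Set.range (hcomp wmap σ n)) ≤ Dval σ n := by
  have key : ∀ y ∈ Set.range (hcomp wmap σ n), (y : ℝ) ∈ Set.Icc 0 (Dval σ n) := by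
    rintro y ⟨x, rfl⟩
    rw [hcomp_eq]
    constructor
    · exact le_min (mul_nonneg (cval_pos σ n).le x.2.1) (Dval_pos σ n).le
    · exact min_le_right _ _
  refine Metric.diam_le_of_forall_dist_le (Dval_pos σ n).le ?_
  intro a ha b hb
  obtain ⟨ha0, ha1⟩ := key a ha
  obtain ⟨hb0, hb1⟩ := key b hb
  rw [Subtype.dist_eq, Real.dist_eq]
  rw [abs_le]
  constructor <;> linarith

def Zwalk (σ : ℕ → Bool) (n : ℕ) : ℤ :=
  ∑ k ∈ Finset.range n, (if σ k then (-1 : ℤ) else 1)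

lemma Zwalk_succ (σ : ℕ → Bool) (n : ℕ) :
    Zwalk σ (n + 1) = Zwalk σ n + (if σ n then (-1:ℤ) else 1) :=
  Finset.sum_range_succ _ _

lemma cval_eq (σ : ℕ → Bool) (n : ℕ) : cval σ n = (2:ℝ) ^ (-(Zwalk σ n)) := by
  induction n with
  | zero => simp [cval, Zwalk]
  | succ n ih =>
    have h2 : (2:ℝ) ≠ 0 := two_ne_zero
    rcases Bool.dichotomy (σ n) with h | h <;>
      simp only [cval, Zwalk_succ, h, if_true, if_false] <;>
      rw [ih, neg_add, zpow_add₀ h2] <;>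
      simp [zpow_neg] <;> ring

lemma det_lemma (σ : ℕ → Bool) (h : ∀ K : ℕ, ∃ m, (K : ℤ) ≤ Zwalk σ m) : σ ∈ Sset := by
  rw [Sset, Set.mem_setOf_eq, Metric.tendsto_atTop]
  intro ε hε
  obtain ⟨K, hK⟩ := exists_pow_lt_of_lt_one hε (by norm_num : (1/2:ℝ) < 1)
  obtain ⟨m, hm⟩ := h K
  refine ⟨m + 1, fun n hn => ?_⟩
  rw [Real.dist_eq, sub_zero, abs_of_nonneg Metric.diam_nonneg]
  calc Metric.diam (Set.range (hcomp wmap σ n)) ≤ Dval σ n := diam_le σ n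
    _ ≤ Dval σ (m + 1) := Dval_antitone σ hn
    _ ≤ cval σ m := Dval_le_cval σ m
    _ = (2:ℝ) ^ (-(Zwalk σ m)) := cval_eq σ m
    _ ≤ (2:ℝ) ^ (-(K:ℤ)) := by
        apply zpow_le_zpow_right₀ one_le_two
        omega
    _ = (1/2:ℝ) ^ K := by
        rw [zpow_neg, zpow_natCast, ← inv_pow, one_div]
    _ < ε := hK

section Prob

open ProbabilityTheory
open scoped ENNReal

variable {p : Measure Bool} {P : Measure (ℕ → Bool)}

lemma bern_measure [IsProbabilityMeasure p] (hP : IsBernoulli p P)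
    (S : Finset ℕ) (sets : ℕ → Set Bool) :
    P (⋂ i ∈ S, (fun σ : ℕ → Bool => σ i) ⁻¹' sets i) = ∏ i ∈ S, p (sets i) := by
  classical
  set n := (S.sup id) + 1 with hn
  have hlt : ∀ i ∈ S, i < n := fun i hi => Nat.lt_succ_of_le (Finset.le_sup (f := id) hi)
  set A : ℕ → Set Bool := fun i => if i ∈ S then sets i else Set.univ with hA
  have hset : {σ : ℕ → Bool | ∀ i < n, σ i ∈ A i}
      = ⋂ i ∈ S, (fun σ : ℕ → Bool => σ i) ⁻¹' sets i := by
    ext σ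
    simp only [Set.mem_setOf_eq, Set.mem_iInter, Set.mem_preimage]
    constructor
    · intro h i hi
      have := h i (hlt i hi)
      simpa [hA, hi] using this
    · intro h i _
      by_cases hi : i ∈ S
      · rw [hA]; simpa [if_pos hi] using h i hi
      · simp [hA, if_neg hi]
  rw [← hset, hP.2 n A fun i => MeasurableSet.of_discrete]
  rw [← Finset.prod_subset (fun i hi => Finset.mem_range.2 (hlt i hi))
    (fun i _ hi => by simp only [hA]; rw [if_neg hi, measure_univ])]
  exact Finset.prod_congr rfl fun i hi => by rw [hA]; simp [if_pos hi]

lemma marginal [IsProbabilityMeasure p] (hP : IsBernoulli p P) (i : ℕ) (s : Set Bool) :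
    P ((fun σ : ℕ → Bool => σ i) ⁻¹' s) = p s := by
  have := bern_measure hP {i} (fun _ => s)
  simpa using this

lemma indep_coord [IsProbabilityMeasure p] (hP : IsBernoulli p P) :
    iIndepFun (fun i (σ : ℕ → Bool) => σ i) P := by
  rw [iIndepFun_iff_measure_inter_preimage_eq_mul]
  intro S sets _
  rw [bern_measure hP S sets]
  exact Finset.prod_congr rfl fun i _ => (marginal hP i (sets i)).symm

/-- The step function. -/
noncomputable def Xstep (i : ℕ) (σ : ℕ → Bool) : ℝ := if σ i then -1 else 1

lemma Xstep_sm (i : ℕ) : StronglyMeasurable (Xstep i) := by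
  have : Measurable (Xstep i) :=
    (Measurable.of_discrete (f := fun b : Bool => if b then (-1:ℝ) else 1)).comp
      (measurable_pi_apply i)
  exact this.stronglyMeasurable

noncomputable def Fwalk (n : ℕ) (σ : ℕ → Bool) : ℝ := ∑ k ∈ Finset.range (n + 1), Xstep k σ

noncomputable def ℱnat : Filtration ℕ (inferInstance : MeasurableSpace (ℕ → Bool)) :=
  Filtration.natural Xstep Xstep_sm

lemma Xstep_integrable [IsProbabilityMeasure P] (i : ℕ) : Integrable (Xstep i) P := by
  refine (integrable_const (1:ℝ)).mono (Xstep_sm i).aestronglyMeasurable ?_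
  refine Filter.Eventually.of_forall fun σ => ?_
  rcases Bool.dichotomy (σ i) with h | h <;> simp [Xstep, h]

lemma Xstep_integral [IsProbabilityMeasure p] (hp : ∀ b : Bool, p {b} = 1 / 2)
    (hP : IsBernoulli p P) (i : ℕ) : ∫ σ, Xstep i σ ∂P = 0 := by
  haveI : IsProbabilityMeasure P := hP.1
  set A : Set (ℕ → Bool) := (fun σ : ℕ → Bool => σ i) ⁻¹' {true} with hA
  have hAm : MeasurableSet A := (measurable_pi_apply i) (MeasurableSet.of_discrete)
  have hPA : P A = 1/2 := by rw [hA, marginal hP, hp true]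
  have hAc : Aᶜ = (fun σ : ℕ → Bool => σ i) ⁻¹' {false} := by
    ext σ
    rcases Bool.dichotomy (σ i) with h | h <;> simp [hA, h]
  have hPAc : P Aᶜ = 1/2 := by rw [hAc, marginal hP, hp false]
  have h1 : ∫ σ in A, Xstep i σ ∂P = (P A).toReal • (-1 : ℝ) := by
    show _ = P.real A • (-1 : ℝ)
    rw [← setIntegral_const]
    refine setIntegral_congr_fun hAm fun σ hσ => ?_
    simp only [hA, Set.mem_preimage, Set.mem_singleton_iff] at hσ
    simp [Xstep, hσ]
  have h2 : ∫ σ in Aᶜ, Xstep i σ ∂P = (P Aᶜ).toReal • (1 : ℝ) := by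
    show _ = P.real Aᶜ • (1 : ℝ)
    rw [← setIntegral_const]
    refine setIntegral_congr_fun hAm.compl fun σ hσ => ?_
    rw [hAc] at hσ
    simp only [Set.mem_preimage, Set.mem_singleton_iff] at hσ
    simp [Xstep, hσ]
  have htr : ((1:ℝ≥0∞)/2).toReal = 1/2 := by
    rw [ENNReal.toReal_div]
    norm_num
  rw [← integral_add_compl hAm (Xstep_integrable i), h1, h2, hPA, hPAc, htr]
  norm_num

lemma Fwalk_martingale [IsProbabilityMeasure p] (hp : ∀ b : Bool, p {b} = 1 / 2)
    (hP : IsBernoulli p P) : Martingale Fwalk ℱnat P := by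
  haveI : IsProbabilityMeasure P := hP.1
  have hadp : StronglyAdapted ℱnat Fwalk := by
    intro n
    have heq : Fwalk n = ∑ k ∈ Finset.range (n + 1), Xstep k := by
      ext σ; simp [Fwalk, Finset.sum_apply]
    rw [heq]
    refine Finset.stronglyMeasurable_sum _ fun k hk => ?_
    exact ((Filtration.stronglyAdapted_natural Xstep_sm) k).mono
      (ℱnat.mono (Nat.lt_succ_iff.mp (Finset.mem_range.mp hk)))
  have hint : ∀ n, Integrable (Fwalk n) P := fun n =>
    integrable_finset_sum _ fun k _ => Xstep_integrable k
  refine ⟨hadp, fun i j hij => ?_⟩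
  have hsplit : Fwalk j = Fwalk i + fun σ => ∑ k ∈ Finset.Ico (i+1) (j+1), Xstep k σ := by
    ext σ
    simp only [Fwalk, Pi.add_apply]
    rw [Finset.sum_range_add_sum_Ico _ (by omega : i + 1 ≤ j + 1)]
  have hG : Integrable (fun σ => ∑ k ∈ Finset.Ico (i+1) (j+1), Xstep k σ) P :=
    integrable_finset_sum _ fun k _ => Xstep_integrable k
  have h0 : ∀ᵐ σ ∂P, ∀ k, i < k → (P[Xstep k|ℱnat i]) σ = 0 := by
    rw [ae_all_iff]
    intro k
    by_cases hik : i < k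
    · have hcond := iIndepFun.condExp_natural_ae_eq_of_lt Xstep_sm
        ((indep_coord hP).comp (fun _ b => if b then (-1:ℝ) else 1)
          (fun _ => Measurable.of_discrete)) hik
      filter_upwards [hcond] with σ hσ
      intro _
      exact hσ.trans (Xstep_integral hp hP k)
    · exact Filter.Eventually.of_forall fun σ h => absurd h hik
  have hadd := condExp_add (μ := P) (m := ℱnat i) (hint i) hG
  have hsum := condExp_finset_sum (μ := P) (m := ℱnat i)
    (fun k (_ : k ∈ Finset.Ico (i+1) (j+1)) => Xstep_integrable k)
  have hself : P[Fwalk i|ℱnat i] = Fwalk i :=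
    condExp_of_stronglyMeasurable (ℱnat.le i) (hadp i) (hint i)
  rw [hsplit]
  filter_upwards [hadd, hsum, h0] with σ h1 h2 h3
  rw [h1]
  simp only [Pi.add_apply, hself]
  have : (P[fun σ => ∑ k ∈ Finset.Ico (i+1) (j+1), Xstep k σ|ℱnat i]) σ = 0 := by
    have he : (fun σ => ∑ k ∈ Finset.Ico (i+1) (j+1), Xstep k σ)
        = ∑ k ∈ Finset.Ico (i+1) (j+1), Xstep k := by
      ext σ; simp [Finset.sum_apply]
    rw [he, h2, Finset.sum_apply]
    refine Finset.sum_eq_zero fun k hk => ?_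
    have hk' := Finset.mem_Ico.mp hk
    exact h3 k (by omega)
  rw [this, add_zero]



lemma not_bddAbove_ae [IsProbabilityMeasure p] (hp : ∀ b : Bool, p {b} = 1 / 2)
    (hP : IsBernoulli p P) :
    ∀ᵐ σ ∂P, ¬ BddAbove (Set.range fun n => Fwalk n σ) := by
  haveI : IsProbabilityMeasure P := hP.1
  have hstep : ∀ (σ : ℕ → Bool) i, Fwalk (i+1) σ - Fwalk i σ = Xstep (i+1) σ := by
    intro σ i
    simp [Fwalk, Finset.sum_range_succ]
  have hbdd : ∀ᵐ σ ∂P, ∀ i, |Fwalk (i+1) σ - Fwalk i σ| ≤ ((1:ℝ≥0):ℝ) := by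
    refine Filter.Eventually.of_forall fun σ i => ?_
    rw [hstep]
    rcases Bool.dichotomy (σ (i+1)) with h | h <;> simp [Xstep, h]
  filter_upwards [(Fwalk_martingale hp hP).submartingale.bddAbove_iff_exists_tendsto hbdd]
    with σ hσ hb
  obtain ⟨c, hc⟩ := hσ.mp hb
  have h1 : Tendsto (fun n => Fwalk (n+1) σ - Fwalk n σ) atTop (𝓝 0) := by
    have := (hc.comp (tendsto_add_atTop_nat 1)).sub hc
    simpa using this
  obtain ⟨N, hN⟩ := (Metric.tendsto_atTop.mp h1) 1 one_pos
  have hN' := hN N le_rfl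
  rw [Real.dist_eq, sub_zero, hstep] at hN'
  rcases Bool.dichotomy (σ (N+1)) with h | h <;> simp [Xstep, h] at hN'

lemma Fwalk_eq_Zwalk (σ : ℕ → Bool) (n : ℕ) : Fwalk n σ = ((Zwalk σ (n+1) : ℤ) : ℝ) := by
  rw [Fwalk, Zwalk, Int.cast_sum]
  refine Finset.sum_congr rfl fun k _ => ?_
  rcases Bool.dichotomy (σ k) with h | h <;> simp [Xstep, h]

end Prob


end Aux

theorem stmt16 (p : Measure Bool) [IsProbabilityMeasure p]
    (hp : ∀ b : Bool, p {b} = 1 / 2)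
    (P : Measure (ℕ → Bool)) (hP : IsBernoulli p P) :
    P Sset = 1 := by
  haveI : IsProbabilityMeasure P := hP.1
  have hae := not_bddAbove_ae hp hP
  have hS : ∀ᵐ σ ∂P, σ ∈ Sset := by
    filter_upwards [hae] with σ hσ
    refine det_lemma σ fun K => ?_
    obtain ⟨y, ⟨n, rfl⟩, hy⟩ := not_bddAbove_iff.mp hσ (K : ℝ)
    refine ⟨n + 1, ?_⟩
    have h2 : (K:ℝ) < ((Zwalk σ (n+1) : ℤ) : ℝ) := by
      simpa [Fwalk_eq_Zwalk] using hy
    exact_mod_cast h2.le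
  have h0 : P Ssetᶜ = 0 := by
    have := MeasureTheory.ae_iff.mp hS
    simpa [Set.compl_def] using this
  refine le_antisymm prob_le_one ?_
  calc (1:ℝ≥0∞) = P Set.univ := measure_univ.symm
    _ = P (Sset ∪ Ssetᶜ) := by rw [Set.union_compl_self]
    _ ≤ P Sset + P Ssetᶜ := measure_union_le _ _
    _ = P Sset := by rw [h0, add_zero]
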